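/- Let a ∈ M(n,Λ,R), p := supp a, and let u ∈ Z_{1/2}(p) be selfadjoint. Set c := (pu − up)/2. Then c* = −c, the exponential h := exp(g(p,u)) (exponential taken in the Banach algebra of bounded real-linear operators on Z) is given by h(z) = e^c z e^{−c} for all z ∈ Z, where e^c is a unitary operator on H, and h maps M(n,Λ,R) bijectively onto itself. -/

import Mathlib

/-! Setting: `H` is a complex Hilbert space, `Z = 𝔏(H)` the C*-algebra of bounded
linear operators on `H`, regarded as a JB*-triple with product
`{a b c} = (a b* c + c b* a)/2`. -/

variable {H : Type*} [NormedAddCommGroup H] [InnerProductSpace ℂ H] [CompleteSpace H]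

/-- A family of pairwise orthogonal (selfadjoint idempotent) projections in `𝔏(H)`. -/
def IsOrthProjFamily {n : ℕ} (e : Fin n → H →L[ℂ] H) : Prop :=
  (∀ k, star (e k) = e k) ∧ (∀ k, e k * e k = e k) ∧ ∀ j k, j ≠ k → e j * e k = 0

/-- Membership in the set `M(n,Λ,R)`: `a = ∑ₖ Λ k • e k` for some family of nonzero
pairwise orthogonal projections `e k` of finite rank `R k`. -/
def MemberM (n : ℕ) (Λ : Fin n → ℂ) (R : Fin n → ℕ) (a : H →L[ℂ] H) : Prop :=
  ∃ e : Fin n → H →L[ℂ] H, IsOrthProjFamily e ∧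
    (∀ k, FiniteDimensional ℂ (LinearMap.range ((e k) : H →ₗ[ℂ] H)) ∧
      Module.finrank ℂ (LinearMap.range ((e k) : H →ₗ[ℂ] H)) = R k) ∧
    a = ∑ k, Λ k • e k

/-- The JB*-triple product of `𝔏(H)`: `{x y z} = (x y* z + z y* x)/2`. -/
noncomputable def tp (x y z : H →L[ℂ] H) : H →L[ℂ] H :=
  (1/2 : ℂ) • (x * star y * z + z * star y * x)

/-- The operator `g(p,u) = p□u − u□p : z ↦ {puz} − {upz}` as a bounded real-linear
operator on `Z = 𝔏(H)`. -/
noncomputable def gOp (p u : H →L[ℂ] H) : (H →L[ℂ] H) →L[ℝ] (H →L[ℂ] H) :=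
  (1/2 : ℝ) • (ContinuousLinearMap.mul ℝ (H →L[ℂ] H) (p * star u)
    + (ContinuousLinearMap.mul ℝ (H →L[ℂ] H)).flip (star u * p)
    - ContinuousLinearMap.mul ℝ (H →L[ℂ] H) (u * star p)
    - (ContinuousLinearMap.mul ℝ (H →L[ℂ] H)).flip (star p * u))

open NormedSpace MulOpposite

noncomputable instance instNormedAlgebraRatCLM : NormedAlgebra ℚ (H →L[ℂ] H) :=
  NormedAlgebra.restrictScalars ℚ ℂ _

noncomputable instance instNormedAlgebraRatCLMop : NormedAlgebra ℚ (H →L[ℂ] H)ᵐᵒᵖ :=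
  NormedAlgebra.restrictScalars ℚ ℂ _

noncomputable instance instNormedAlgebraRatCLM2 :
    NormedAlgebra ℚ ((H →L[ℂ] H) →L[ℝ] (H →L[ℂ] H)) :=
  NormedAlgebra.restrictScalars ℚ ℝ _

/-- Left multiplication as a ring hom into real-linear CLMs. -/
noncomputable def lmulHom : (H →L[ℂ] H) →+* ((H →L[ℂ] H) →L[ℝ] (H →L[ℂ] H)) where
  toFun a := ContinuousLinearMap.mul ℝ (H →L[ℂ] H) a
  map_one' := by ext z; simp
  map_mul' a b := by ext z; simp [mul_assoc]
  map_zero' := by ext z; simp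
  map_add' a b := by ext z; simp [add_mul]

/-- Right multiplication as a ring hom from the opposite algebra. -/
noncomputable def rmulHom : (H →L[ℂ] H)ᵐᵒᵖ →+* ((H →L[ℂ] H) →L[ℝ] (H →L[ℂ] H)) where
  toFun a := (ContinuousLinearMap.mul ℝ (H →L[ℂ] H)).flip a.unop
  map_one' := by ext z; simp
  map_mul' a b := by ext z; simp [mul_assoc]
  map_zero' := by ext z; simp
  map_add' a b := by ext z; simp [mul_add]

lemma exp_lmul (c : H →L[ℂ] H) :
    exp (lmulHom (H := H) c) = lmulHom (exp c) := by
  rw [← map_exp (lmulHom (H := H)) (ContinuousLinearMap.mul ℝ (H →L[ℂ] H)).continuous c]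

lemma exp_rmul (c : H →L[ℂ] H) :
    exp (rmulHom (H := H) (op c)) = rmulHom (op (exp c)) := by
  have hcont : Continuous (rmulHom (H := H)) :=
    ((ContinuousLinearMap.mul ℝ (H →L[ℂ] H)).flip.continuous).comp continuous_unop
  rw [← map_exp (rmulHom (H := H)) hcont (op c), exp_op]

/-- Conjugation by a unitary preserves membership in `M(n,Λ,R)`. -/
lemma memberM_conj {n : ℕ} {Λ : Fin n → ℂ} {R : Fin n → ℕ}
    (v : H →L[ℂ] H) (hv1 : star v * v = 1) (hv2 : v * star v = 1)
    {x : H →L[ℂ] H} (hx : MemberM n Λ R x) : MemberM n Λ R (v * x * star v) := by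
  obtain ⟨e, ⟨hes, hei, heo⟩, hrk, hsum⟩ := hx
  have hvl : ∀ y : H, star v (v y) = y := fun y => by
    rw [← ContinuousLinearMap.mul_apply, hv1, ContinuousLinearMap.one_apply]
  have hvr : ∀ y : H, v (star v y) = y := fun y => by
    rw [← ContinuousLinearMap.mul_apply, hv2, ContinuousLinearMap.one_apply]
  have hvinj : Function.Injective v := Function.LeftInverse.injective hvl
  have hwsurj : Function.Surjective (star v : H →L[ℂ] H) := fun y => ⟨v y, hvl y⟩
  refine ⟨fun k => v * e k * star v, ⟨?_, ?_, ?_⟩, ?_, ?_⟩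
  · intro k
    simp only [star_mul, star_star, hes k, mul_assoc]
  · intro k
    have h1 : v * e k * star v * (v * e k * star v) = v * (e k * ((star v * v) * e k)) * star v := by
      simp only [mul_assoc]
    rw [h1, hv1, one_mul, hei k]
  · intro j k hjk
    have h1 : v * e j * star v * (v * e k * star v) = v * (e j * ((star v * v) * e k)) * star v := by
      simp only [mul_assoc]
    rw [h1, hv1, one_mul, heo j k hjk]
    simp
  · intro k
    have hrange : LinearMap.range ((v * e k * star v : H →L[ℂ] H) : H →ₗ[ℂ] H)
        = (LinearMap.range ((e k) : H →ₗ[ℂ] H)).map (v : H →ₗ[ℂ] H) := by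
      have : (v * e k * star v : H →L[ℂ] H) = v.comp ((e k).comp (star v)) := by
        rw [ContinuousLinearMap.mul_def, ContinuousLinearMap.mul_def]; rfl
      rw [this, ContinuousLinearMap.toLinearMap_comp, LinearMap.range_comp,
        ContinuousLinearMap.toLinearMap_comp, LinearMap.range_comp_of_range_eq_top]
      rw [LinearMap.range_eq_top]
      exact hwsurj
    haveI : FiniteDimensional ℂ (LinearMap.range ((e k) : H →ₗ[ℂ] H)) := (hrk k).1
    have equiv := Submodule.equivMapOfInjective (v : H →ₗ[ℂ] H) hvinj
      (LinearMap.range ((e k) : H →ₗ[ℂ] H))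
    rw [hrange]
    constructor
    · exact Module.Finite.equiv equiv
    · rw [← equiv.finrank_eq]
      exact (hrk k).2
  · rw [hsum, Finset.mul_sum, Finset.sum_mul]
    exact Finset.sum_congr rfl fun k _ => by rw [mul_smul_comm, smul_mul_assoc]

set_option maxHeartbeats 1600000 in
/-- For `a ∈ M(n,Λ,R)` with support `p` and a selfadjoint
`u ∈ Z_{1/2}(p)`, the element `c = (pu − up)/2` is skew-adjoint, `e^c` is unitary,
`h = exp(g(p,u))` acts by `z ↦ e^c z e^{−c}`, and `h` maps `M(n,Λ,R)` bijectively onto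
itself. -/
theorem exp_g_is_unitary_conjugation
    (n : ℕ) (hn : 1 ≤ n) (Λ : Fin n → ℂ) (R : Fin n → ℕ)
    (hΛ0 : ∀ k, Λ k ≠ 0) (hΛinj : Function.Injective Λ) (hR : ∀ k, 0 < R k)
    (e : Fin n → H →L[ℂ] H) (he : IsOrthProjFamily e)
    (herank : ∀ k, FiniteDimensional ℂ (LinearMap.range ((e k) : H →ₗ[ℂ] H)) ∧
      Module.finrank ℂ (LinearMap.range ((e k) : H →ₗ[ℂ] H)) = R k)
    (a p : H →L[ℂ] H) (ha : a = ∑ k, Λ k • e k) (hp : p = ∑ k, e k)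
    (u : H →L[ℂ] H) (hu : p * u + u * p = u) (hus : star u = u)
    (c : H →L[ℂ] H) (hc : c = (1/2 : ℂ) • (p * u - u * p)) :
    star c = -c ∧
    star (NormedSpace.exp c) * NormedSpace.exp c = 1 ∧
    NormedSpace.exp c * star (NormedSpace.exp c) = 1 ∧
    (∀ z : H →L[ℂ] H, (NormedSpace.exp (gOp p u)) z
        = NormedSpace.exp c * z * NormedSpace.exp (-c)) ∧
    Set.BijOn (fun z => (NormedSpace.exp (gOp p u)) z)
      {x : H →L[ℂ] H | MemberM n Λ R x} {x : H →L[ℂ] H | MemberM n Λ R x} := by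
  have hps : star p = p := by
    rw [hp]
    simp only [star_sum]
    exact Finset.sum_congr rfl fun k _ => he.1 k
  -- skew-adjointness of c
  have hcs : star c = -c := by
    rw [hc, star_smul, star_sub, star_mul, star_mul, hps, hus, ← smul_neg, neg_sub]
    norm_num
  -- unitarity of exp c
  have hstar_exp : star (exp c) = exp (-c) := by
    rw [star_exp, hcs]
  have hmul1 : exp (-c) * exp c = 1 := by
    rw [← exp_add_of_commute ((Commute.refl c).neg_left), neg_add_cancel, exp_zero]
  have hmul2 : exp c * exp (-c) = 1 := by
    rw [← exp_add_of_commute ((Commute.refl c).neg_right), add_neg_cancel, exp_zero]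
  -- identification of gOp
  have hsmul_half : ∀ x : H →L[ℂ] H, (1/2 : ℂ) • x = (1/2 : ℝ) • x := fun x => by
    rw [show ((1/2 : ℂ)) = algebraMap ℝ ℂ (1/2) by norm_num, algebraMap_smul]
  have hgop : gOp p u = lmulHom (H := H) c + rmulHom (H := H) (op (-c)) := by
    refine ContinuousLinearMap.ext fun z => ?_
    have lhs : gOp p u z = (1/2 : ℝ) • (p * u * z + z * (u * p) - u * p * z - z * (p * u)) := by
      simp only [gOp, ContinuousLinearMap.smul_apply, ContinuousLinearMap.sub_apply,
        ContinuousLinearMap.add_apply, ContinuousLinearMap.mul_apply',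
        ContinuousLinearMap.flip_apply, hps, hus]
    have rhs : (lmulHom (H := H) c + rmulHom (H := H) (op (-c))) z = c * z - z * c := by
      simp only [lmulHom, rmulHom, ContinuousLinearMap.add_apply, RingHom.coe_mk,
        MonoidHom.coe_mk, OneHom.coe_mk, ContinuousLinearMap.mul_apply',
        ContinuousLinearMap.flip_apply, unop_op]
      rw [mul_neg, ← sub_eq_add_neg]
    rw [lhs, rhs, hc, smul_mul_assoc, mul_smul_comm, ← smul_sub, hsmul_half]
    congr 1
    rw [sub_mul, mul_sub]
    abel
  have hcomm : Commute (lmulHom (H := H) c) (rmulHom (H := H) (op (-c))) := by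
    show lmulHom (H := H) c * rmulHom (H := H) (op (-c))
        = rmulHom (H := H) (op (-c)) * lmulHom (H := H) c
    refine ContinuousLinearMap.ext fun z => ?_
    rw [ContinuousLinearMap.mul_apply, ContinuousLinearMap.mul_apply]
    simp only [lmulHom, rmulHom, RingHom.coe_mk, MonoidHom.coe_mk, OneHom.coe_mk,
      ContinuousLinearMap.mul_apply', ContinuousLinearMap.flip_apply, unop_op]
    rw [mul_assoc]
  have hexp_eq : (exp : (H →L[ℂ] H) → (H →L[ℂ] H)) = exp :=
    rfl
  have hmain : ∀ z : H →L[ℂ] H, (exp (gOp p u)) z = exp c * z * exp (-c) := by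
    intro z
    have h1 : exp (gOp p u) = lmulHom (H := H) (exp c) * rmulHom (H := H) (op (exp (-c))) := by
      rw [hgop, exp_add_of_commute hcomm, exp_lmul, exp_rmul]
    rw [h1, ContinuousLinearMap.mul_apply]
    simp only [lmulHom, rmulHom, RingHom.coe_mk, MonoidHom.coe_mk, OneHom.coe_mk,
      ContinuousLinearMap.mul_apply', ContinuousLinearMap.flip_apply, unop_op]
    rw [hexp_eq, mul_assoc]
  refine ⟨hcs, by rw [hstar_exp]; exact hmul1, by rw [hstar_exp]; exact hmul2, hmain, ?_⟩
  -- bijection on M(n,Λ,R)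
  have hvstar : star (exp c) = exp (-c) := hstar_exp
  have hfwd : ∀ x, MemberM n Λ R x → MemberM n Λ R (exp c * x * exp (-c)) := by
    intro x hx
    have := memberM_conj (exp c) (by rw [hvstar]; exact hmul1) (by rw [hvstar]; exact hmul2) hx
    rwa [hvstar] at this
  have hbwd : ∀ x, MemberM n Λ R x → MemberM n Λ R (exp (-c) * x * exp c) := by
    intro x hx
    have hws : star (exp (-c)) = exp c := by
      rw [star_exp, star_neg, hcs, neg_neg]
    have := memberM_conj (exp (-c)) (by rw [hws]; exact hmul2) (by rw [hws]; exact hmul1) hx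
    rwa [hws] at this
  constructor
  · intro x hx
    simp only [Set.mem_setOf_eq] at hx ⊢
    rw [hmain]
    exact hfwd x hx
  constructor
  · intro x _ y _ hxy
    simp only [hmain] at hxy
    have : exp (-c) * (exp c * x * exp (-c)) * exp c
        = exp (-c) * (exp c * y * exp (-c)) * exp c := by rw [hxy]
    calc x = exp (-c) * (exp c * x * exp (-c)) * exp c := by
            rw [show exp (-c) * (exp c * x * exp (-c)) * exp c
              = (exp (-c) * exp c) * x * (exp (-c) * exp c) by noncomm_ring, hmul1]; noncomm_ring
      _ = exp (-c) * (exp c * y * exp (-c)) * exp c := this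
      _ = y := by
            rw [show exp (-c) * (exp c * y * exp (-c)) * exp c
              = (exp (-c) * exp c) * y * (exp (-c) * exp c) by noncomm_ring, hmul1]; noncomm_ring
  · intro x hx
    simp only [Set.mem_setOf_eq] at hx
    refine ⟨exp (-c) * x * exp c, hbwd x hx, ?_⟩
    simp only [hmain]
    rw [show exp c * (exp (-c) * x * exp c) * exp (-c)
      = (exp c * exp (-c)) * x * (exp c * exp (-c)) by noncomm_ring, hmul2]
    noncomm_ring
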